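/- Let a, b ∈ {1, 3} ⊆ ℤ/4ℤ and R = R_{a+bw}. Then the principal ideals (2), (2w) and (2+2w) of R coincide, and R has exactly three ideals, namely (0) ⊊ (2) ⊊ R. -/

import Mathlib

open Polynomial

/-- The base ring ℤ/4ℤ. -/
abbrev Z4 := ZMod 4

/-- The polynomial X² − (a + bX) over ℤ/4ℤ. -/
noncomputable def wPoly (a b : Z4) : Z4[X] := X ^ 2 - (C b * X + C a)

/-- The ring R_{a+bw} = (ℤ/4ℤ)[X]/(X² − (a + bX)); every element is uniquely
x₀ + x₁·w with x₀, x₁ ∈ ℤ/4ℤ, and w² = a + b·w. -/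
abbrev Rw (a b : Z4) : Type := AdjoinRoot (wPoly a b)

/-- The element w of R_{a+bw}. -/
noncomputable def ww (a b : Z4) : Rw a b := AdjoinRoot.root _

/-- for a, b ∈ {1,3} ⊆ ℤ/4ℤ, the ideals (2), (2w) and (2+2w) of R_{a+bw}
coincide, and R_{a+bw} has exactly three ideals, namely (0) ⊊ (2) ⊊ R_{a+bw}. -/
instance : Nontrivial Z4 := ⟨0, 1, by decide⟩

lemma wPoly_monic (a b : Z4) : (wPoly a b).Monic := by
  unfold wPoly
  exact monic_X_pow_sub (lt_of_le_of_lt degree_linear_le (by norm_num))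

lemma wPoly_deg (a b : Z4) : (wPoly a b).degree = 2 := by
  unfold wPoly
  rw [degree_sub_eq_left_of_degree_lt]
  · exact degree_X_pow 2
  · rw [degree_X_pow]
    exact lt_of_le_of_lt degree_linear_le (by norm_num)

lemma ww_sq (a b : Z4) :
    (ww a b)^2 = algebraMap Z4 (Rw a b) a + algebraMap Z4 (Rw a b) b * ww a b := by
  have h : AdjoinRoot.mk (wPoly a b) (X ^ 2 - (C b * X + C a)) = 0 := AdjoinRoot.mk_self
  rw [map_sub, map_add, map_mul, map_pow, sub_eq_zero] at h
  simpa [ww, AdjoinRoot.mk_C, AdjoinRoot.mk_X, AdjoinRoot.algebraMap_eq, add_comm] using h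

lemma Rw_repr (a b : Z4) (x : Rw a b) :
    ∃ c0 c1 : Z4, x = algebraMap Z4 (Rw a b) c0 + algebraMap Z4 (Rw a b) c1 * ww a b := by
  obtain ⟨p, rfl⟩ := AdjoinRoot.mk_surjective x
  refine ⟨(p %ₘ wPoly a b).coeff 0, (p %ₘ wPoly a b).coeff 1, ?_⟩
  conv_lhs => rw [← modByMonic_add_div p (wPoly a b)]
  rw [map_add, map_mul, AdjoinRoot.mk_self, zero_mul, add_zero]
  have hdeg : (p %ₘ wPoly a b).natDegree ≤ 1 := by
    have h := natDegree_modByMonic_lt p (wPoly_monic a b) (by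
      intro h1
      have := wPoly_deg a b
      rw [h1, degree_one] at this
      norm_num at this)
    have h2 : (wPoly a b).natDegree = 2 := natDegree_eq_of_degree_eq_some (wPoly_deg a b)
    omega
  conv_lhs => rw [eq_X_add_C_of_natDegree_le_one hdeg]
  rw [map_add, map_mul, AdjoinRoot.mk_C, AdjoinRoot.mk_C, AdjoinRoot.mk_X]
  simp only [← AdjoinRoot.algebraMap_eq, ww]
  ring

lemma mul_conj (a b c0 c1 : Z4) :
    (algebraMap Z4 (Rw a b) c0 + algebraMap Z4 (Rw a b) c1 * ww a b) *
      (algebraMap Z4 (Rw a b) (c0 + b*c1) - algebraMap Z4 (Rw a b) c1 * ww a b)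
    = algebraMap Z4 (Rw a b) (c0^2 + b*c0*c1 - a*c1^2) := by
  simp only [map_add, map_mul, map_sub, map_pow]
  linear_combination (-(algebraMap Z4 (Rw a b) c1)^2) * ww_sq a b

lemma isUnit_of_norm (a b c0 c1 : Z4) (h : IsUnit (c0^2 + b*c0*c1 - a*c1^2)) :
    IsUnit (algebraMap Z4 (Rw a b) c0 + algebraMap Z4 (Rw a b) c1 * ww a b) := by
  obtain ⟨u, hu⟩ := h
  refine IsUnit.of_mul_eq_one
    ((algebraMap Z4 (Rw a b) (c0 + b*c1) - algebraMap Z4 (Rw a b) c1 * ww a b) *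
      algebraMap Z4 (Rw a b) ↑u⁻¹) ?_
  rw [← mul_assoc, mul_conj, ← map_mul, ← hu, Units.mul_inv, map_one]

lemma key (a b : Z4) (ha : a = 1 ∨ a = 3) (hb : b = 1 ∨ b = 3) (c0 c1 : Z4) :
    IsUnit (c0^2 + b*c0*c1 - a*c1^2) ∨ ∃ d0 d1 : Z4, c0 = 2*d0 ∧ c1 = 2*d1 := by
  rcases ha with rfl | rfl <;> rcases hb with rfl | rfl <;> revert c0 c1 <;> decide

lemma Rw_two_ne_zero (a b : Z4) : (2 : Rw a b) ≠ 0 := by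
  intro h
  have h2 : (2 : Rw a b) = AdjoinRoot.mk (wPoly a b) (C 2) := by
    rw [AdjoinRoot.mk_C]
    exact (map_ofNat (algebraMap Z4 (Rw a b)) 2).symm
  rw [h2, AdjoinRoot.mk_eq_zero] at h
  obtain ⟨q, hq⟩ := h
  rw [mul_comm] at hq
  have hq0 : q ≠ 0 := by
    intro h0; rw [h0, zero_mul] at hq
    exact (by decide : (2 : Z4) ≠ 0) (by simpa [C_eq_zero] using hq)
  have := (wPoly_monic a b).degree_mul (p := q)
  rw [← hq, wPoly_deg] at this
  have hC : (C (2 : Z4)).degree ≤ 0 := degree_C_le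
  rw [this] at hC
  have hd := degree_eq_natDegree hq0
  rw [hd] at hC
  have he : ((q.natDegree : WithBot ℕ) + 2 : WithBot ℕ)
      = ((q.natDegree + 2 : ℕ) : WithBot ℕ) := by push_cast; ring
  rw [he, show (0 : WithBot ℕ) = ((0 : ℕ) : WithBot ℕ) from rfl, Nat.cast_le] at hC
  omega

lemma four_eq_zero (a b : Z4) : (4 : Rw a b) = 0 := by
  have : ((4 : Z4) : Rw a b) = algebraMap Z4 (Rw a b) 4 := by
    simp [AdjoinRoot.algebraMap_eq]
  have h4 : (4 : Z4) = 0 := by decide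
  calc (4 : Rw a b) = algebraMap Z4 (Rw a b) 4 := by rw [map_ofNat]
    _ = 0 := by rw [h4, map_zero]


theorem ideals_of_Rw_units_case (a b : Z4) (ha : a = 1 ∨ a = 3) (hb : b = 1 ∨ b = 3) :
    Ideal.span {(2 : Rw a b)} = Ideal.span {2 * ww a b} ∧
    Ideal.span {(2 : Rw a b)} = Ideal.span {2 + 2 * ww a b} ∧
    (∀ I : Ideal (Rw a b), I = ⊥ ∨ I = Ideal.span {(2 : Rw a b)} ∨ I = ⊤) ∧
    (⊥ : Ideal (Rw a b)) < Ideal.span {(2 : Rw a b)} ∧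
    Ideal.span {(2 : Rw a b)} < (⊤ : Ideal (Rw a b)) := by
  have hw : IsUnit (ww a b) := by
    have := isUnit_of_norm a b 0 1 (by
      rcases ha with rfl | rfl <;> rcases hb with rfl | rfl <;> decide)
    simpa using this
  have h1w : IsUnit (1 + ww a b) := by
    have := isUnit_of_norm a b 1 1 (by
      rcases ha with rfl | rfl <;> rcases hb with rfl | rfl <;> decide)
    simpa using this
  have hunit : ∀ c0 c1 : Z4, (¬ ∃ d0 d1 : Z4, c0 = 2*d0 ∧ c1 = 2*d1) →
      IsUnit (algebraMap Z4 (Rw a b) c0 + algebraMap Z4 (Rw a b) c1 * ww a b) := by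
    intro c0 c1 h
    rcases key a b ha hb c0 c1 with hu | he
    · exact isUnit_of_norm a b c0 c1 hu
    · exact absurd he h
  have hspan2 : ∀ c0 c1 : Z4, (∃ d0 d1 : Z4, c0 = 2*d0 ∧ c1 = 2*d1) →
      algebraMap Z4 (Rw a b) c0 + algebraMap Z4 (Rw a b) c1 * ww a b ∈
        Ideal.span {(2 : Rw a b)} := by
    rintro c0 c1 ⟨d0, d1, rfl, rfl⟩
    rw [Ideal.mem_span_singleton]
    exact ⟨algebraMap Z4 (Rw a b) d0 + algebraMap Z4 (Rw a b) d1 * ww a b, by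
      simp only [map_mul, map_ofNat]; ring⟩
  refine ⟨?_, ?_, ?_, ?_, ?_⟩
  · exact (Ideal.span_singleton_mul_right_unit hw 2).symm
  · have : (2 : Rw a b) + 2 * ww a b = 2 * (1 + ww a b) := by ring
    rw [this]
    exact (Ideal.span_singleton_mul_right_unit h1w 2).symm
  · intro I
    by_cases htop : I = ⊤
    · exact Or.inr (Or.inr htop)
    by_cases hbot : I = ⊥
    · exact Or.inl hbot
    refine Or.inr (Or.inl ?_)
    have hsub : I ≤ Ideal.span {(2 : Rw a b)} := by
      intro x hx
      obtain ⟨c0, c1, rfl⟩ := Rw_repr a b x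
      rcases key a b ha hb c0 c1 with hu | he
      · exact absurd (I.eq_top_of_isUnit_mem hx (isUnit_of_norm a b c0 c1 hu)) htop
      · exact hspan2 c0 c1 he
    refine le_antisymm hsub ?_
    obtain ⟨y, hyI, hy0⟩ := Submodule.exists_mem_ne_zero_of_ne_bot hbot
    have hy2 := hsub hyI
    rw [Ideal.mem_span_singleton] at hy2
    obtain ⟨t, rfl⟩ := hy2
    obtain ⟨c0, c1, rfl⟩ := Rw_repr a b t
    have ht : ¬ ∃ d0 d1 : Z4, c0 = 2*d0 ∧ c1 = 2*d1 := by
      rintro ⟨d0, d1, rfl, rfl⟩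
      apply hy0
      have : (2 : Rw a b) * (algebraMap Z4 (Rw a b) (2*d0) +
          algebraMap Z4 (Rw a b) (2*d1) * ww a b)
          = 4 * (algebraMap Z4 (Rw a b) d0 + algebraMap Z4 (Rw a b) d1 * ww a b) := by
        simp only [map_mul, map_ofNat]; ring
      rw [this, four_eq_zero, zero_mul]
    obtain ⟨u, hu⟩ := hunit c0 c1 ht
    rw [Ideal.span_le, Set.singleton_subset_iff]
    have h2 : (2 : Rw a b) = (2 * ↑u) * ↑u⁻¹ := by
      rw [mul_assoc, Units.mul_inv, mul_one]
    rw [h2]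
    exact I.mul_mem_right _ (by rw [hu]; exact hyI)
  · rw [bot_lt_iff_ne_bot, Ne, Ideal.span_singleton_eq_bot]
    exact Rw_two_ne_zero a b
  · rw [lt_top_iff_ne_top, Ne, Ideal.eq_top_iff_one, Ideal.mem_span_singleton]
    rintro ⟨x, hx⟩
    apply Rw_two_ne_zero a b
    calc (2 : Rw a b) = 2 * 1 := (mul_one 2).symm
      _ = 2 * (2 * x) := by rw [← hx]
      _ = 4 * x := by ring
      _ = 0 := by rw [four_eq_zero, zero_mul]
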